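/- Let (𝒢, g₁, g₂) be a twilled pre-Lie algebra with components ∗₁, ∗₂ of the multiplication, and suppose H: g₂ → g₁ satisfies the Maurer–Cartan condition H(u)∗₁H(v) + H(u)∗₂v + u∗₂H(v) = H(H(u)∗₁v + u∗₁H(v)) + H(u∗₂v) for all u,v ∈ g₂. Then u ·^H v := u∗₂v + H(u)∗₁v + u∗₁H(v) defines a pre-Lie algebra structure on g₂. -/
import Mathlib


/-- The pre-Lie identity for a multiplication on an additive group. -/
def IsPreLieMul {A : Type*} [AddCommGroup A] (f : A → A → A) : Prop :=
  ∀ x y z : A, f (f x y) z - f x (f y z) = f (f y x) z - f y (f x z)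

/-- Let `(𝒢 = g₁ ⊕ g₂, ∗)` be a twilled pre-Lie algebra and
`H : g₂ → g₁` satisfy the Maurer–Cartan condition
`H(u)∗₁H(v) + H(u)∗₂v + u∗₂H(v) = H(H(u)∗₁v + u∗₁H(v)) + H(u∗₂v)`.
Then `u ·^H v := u∗₂v + H(u)∗₁v + u∗₁H(v)` is a pre-Lie structure on `g₂`.
(Here `.1`/`.2` denote `g₁`/`g₂` components of the products in `𝒢`.) -/
theorem MaurerCartan_gives_preLie_on_g2
    {𝕜 G1 G2 : Type*} [Field 𝕜] [CharZero 𝕜]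
    [AddCommGroup G1] [Module 𝕜 G1] [AddCommGroup G2] [Module 𝕜 G2]
    (m : (G1 × G2) →ₗ[𝕜] (G1 × G2) →ₗ[𝕜] (G1 × G2))
    (hm : IsPreLieMul fun a b => m a b)
    (hsub1 : ∀ x y : G1, (m (x, (0 : G2)) (y, 0)).2 = 0)
    (hsub2 : ∀ u v : G2, (m ((0 : G1), u) (0, v)).1 = 0)
    (H : G2 →ₗ[𝕜] G1)
    (hMC : ∀ u v : G2,
      (m (H u, (0 : G2)) (H v, 0)).1 + (m (H u, (0 : G2)) (0, v)).1 +
          (m ((0 : G1), u) (H v, 0)).1 =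
        H ((m (H u, (0 : G2)) (0, v)).2 + (m ((0 : G1), u) (H v, 0)).2) +
          H ((m ((0 : G1), u) (0, v)).2)) :
    IsPreLieMul (fun u v : G2 =>
      (m ((0 : G1), u) (0, v)).2 + (m (H u, (0 : G2)) (0, v)).2 +
        (m ((0 : G1), u) (H v, 0)).2) := by
  set P : G2 → G2 → G2 := fun u v =>
    (m ((0 : G1), u) (0, v)).2 + (m (H u, (0 : G2)) (0, v)).2 +
      (m ((0 : G1), u) (H v, 0)).2 with hP
  have key : ∀ u v : G2, m (H u, u) (H v, v) = (H (P u v), P u v) := by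
    intro u v
    have e1 : ((H u, u) : G1 × G2) = (H u, 0) + (0, u) := by simp
    have e2 : ((H v, v) : G1 × G2) = (H v, 0) + (0, v) := by simp
    rw [e1, e2]
    simp only [map_add, LinearMap.add_apply]
    have h2 := hMC u v
    ext
    · simp only [Prod.fst_add, hP, map_add]
      rw [hsub2 u v]
      rw [map_add] at h2
      abel_nf at h2 ⊢
      exact h2
    · simp only [Prod.snd_add, hP]
      rw [hsub1 (H u) (H v)]
      abel
  have key2 : ∀ u v : G2, P u v = (m (H u, u) (H v, v)).2 := by
    intro u v; rw [key]
  have e : ∀ a b c : G2, P (P a b) c = (m (m (H a, a) (H b, b)) (H c, c)).2 := by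
    intro a b c; rw [key2 (P a b) c, ← key a b]
  have e' : ∀ a b c : G2, P a (P b c) = (m (H a, a) (m (H b, b) (H c, c))).2 := by
    intro a b c; rw [key2 a (P b c), ← key b c]
  intro x y z
  have hm' := hm (H x, x) (H y, y) (H z, z)
  have h2 := congrArg Prod.snd hm'
  simp only [Prod.snd_sub] at h2
  rw [e, e', e, e']
  exact h2
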